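/- Let A : ℝ → ℝ be continuously differentiable, let 𝒟 = [a,b] be a compact interval with A(v) ≤ −ν < 0 for all v ∈ 𝒟, and set g₂ = max_{v ∈ 𝒟} |A'(v)|. Then for any two measurable signals V, V' : (−∞,0] → 𝒟 and any τ ≤ 0, | exp(∫_τ^0 A(V_s) ds) − exp(∫_τ^0 A(V'_s) ds) | ≤ e^{ν τ} · g₂ · ∫_τ^0 |V_s − V'_s| ds. -/

import Mathlib

lemma dms_aux_exp_sub (x y M : ℝ) (hx : x ≤ M) (hy : y ≤ M) :
    |Real.exp x - Real.exp y| ≤ Real.exp M * |x - y| := by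
  wlog h : y ≤ x generalizing x y
  · have := this y x hy hx (le_of_not_ge h)
    rwa [abs_sub_comm (Real.exp y), abs_sub_comm y x] at this
  rw [abs_of_nonneg (sub_nonneg.2 (Real.exp_le_exp.2 h)), abs_of_nonneg (sub_nonneg.2 h)]
  have h1 : Real.exp x - Real.exp y = Real.exp x * (1 - Real.exp (y - x)) := by
    rw [mul_sub, mul_one, ← Real.exp_add]; ring_nf
  rw [h1]
  have h2 : 1 - Real.exp (y - x) ≤ x - y := by
    have := Real.add_one_le_exp (y - x); linarith
  calc Real.exp x * (1 - Real.exp (y - x)) ≤ Real.exp x * (x - y) := by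
        apply mul_le_mul_of_nonneg_left h2 (Real.exp_pos x).le
    _ ≤ Real.exp M * (x - y) := by
        apply mul_le_mul_of_nonneg_right (Real.exp_le_exp.2 hx) (by linarith)

lemma dms_aux_ii (τ : ℝ) (hτ : τ ≤ 0) (f : ℝ → ℝ) (hf : Measurable f) (C : ℝ)
    (h : ∀ t ∈ Set.uIoc τ 0, |f t| ≤ C) : IntervalIntegrable f MeasureTheory.volume τ 0 := by
  rw [intervalIntegrable_iff]
  apply MeasureTheory.Integrable.mono' (g := fun _ => C)
      (MeasureTheory.integrableOn_const measure_Ioc_lt_top.ne enorm_ne_top)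
      hf.aestronglyMeasurable.restrict
  exact (MeasureTheory.ae_restrict_iff' measurableSet_uIoc).2 (MeasureTheory.ae_of_all _ h)

/-- key intermediate bound for Theorem 1: Lipschitz estimate of
the transition function `Φ_{0,τ}(V) = exp(∫_τ^0 A(V_s) ds)` with respect to the
input, for inputs valued in a compact interval `𝒟 = [a,b]` on which
`A(v) ≤ −ν < 0`, with `g₂ = max_{v ∈ 𝒟} |A'(v)|`. -/
theorem dms_transition_function_input_lipschitz
    (A : ℝ → ℝ) (hA : ContDiff ℝ 1 A)
    (a b ν : ℝ) (hab : a ≤ b) (hν : 0 < ν)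
    (hAν : ∀ v ∈ Set.Icc a b, A v ≤ -ν)
    (g₂ : ℝ) (hg₂ : IsGreatest ((fun v => |deriv A v|) '' Set.Icc a b) g₂)
    (V V' : ℝ → ℝ) (hVm : Measurable V) (hV'm : Measurable V')
    (hV : ∀ t ≤ (0 : ℝ), V t ∈ Set.Icc a b)
    (hV' : ∀ t ≤ (0 : ℝ), V' t ∈ Set.Icc a b)
    (τ : ℝ) (hτ : τ ≤ 0) :
    |Real.exp (∫ s in τ..0, A (V s)) - Real.exp (∫ s in τ..0, A (V' s))| ≤
      Real.exp (ν * τ) * g₂ * ∫ s in τ..0, |V s - V' s| := by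
  have hAc : Continuous A := hA.continuous
  have hmem : ∀ t ∈ Set.uIoc τ 0, t ≤ 0 := by
    intro t ht
    rw [Set.uIoc_of_le hτ] at ht
    exact ht.2
  -- bound on |A| on Icc a b
  obtain ⟨C, hC⟩ := (isCompact_Icc (a := a) (b := b)).exists_bound_of_continuousOn
    hAc.continuousOn
  -- Lipschitz bound on A
  have hg₂0 : 0 ≤ g₂ := by
    obtain ⟨v, hv, hve⟩ := hg₂.1
    exact hve ▸ abs_nonneg _
  have hLip : ∀ u ∈ Set.Icc a b, ∀ w ∈ Set.Icc a b, |A u - A w| ≤ g₂ * |u - w| := by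
    intro u hu w hw
    have := (convex_Icc a b).norm_image_sub_le_of_norm_deriv_le
      (fun x _ => (hA.differentiable one_ne_zero) x)
      (fun x hx => hg₂.2 ⟨x, hx, rfl⟩) hw hu
    simpa [Real.norm_eq_abs] using this
  have hIV : IntervalIntegrable (fun s => A (V s)) MeasureTheory.volume τ 0 :=
    dms_aux_ii τ hτ _ (hAc.measurable.comp hVm) C (fun t ht => by
      simpa [Real.norm_eq_abs] using hC _ (hV t (hmem t ht)))
  have hIV' : IntervalIntegrable (fun s => A (V' s)) MeasureTheory.volume τ 0 :=
    dms_aux_ii τ hτ _ (hAc.measurable.comp hV'm) C (fun t ht => by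
      simpa [Real.norm_eq_abs] using hC _ (hV' t (hmem t ht)))
  have hIabs : IntervalIntegrable (fun s => |V s - V' s|) MeasureTheory.volume τ 0 :=
    dms_aux_ii τ hτ _ (hVm.sub hV'm).abs (b - a) (fun t ht => by
      rw [abs_abs]
      have h1 := hV t (hmem t ht); have h2 := hV' t (hmem t ht)
      rw [abs_sub_le_iff]
      constructor <;> [linarith [h1.2, h2.1]; linarith [h1.1, h2.2]])
  have hIAd : IntervalIntegrable (fun s => |A (V s) - A (V' s)|) MeasureTheory.volume τ 0 :=
    dms_aux_ii τ hτ _ ((hAc.measurable.comp hVm).sub (hAc.measurable.comp hV'm)).abs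
      (C + C) (fun t ht => by
      rw [abs_abs]
      have h1 := hC _ (hV t (hmem t ht)); have h2 := hC _ (hV' t (hmem t ht))
      rw [Real.norm_eq_abs] at h1 h2
      calc |A (V t) - A (V' t)| ≤ |A (V t)| + |A (V' t)| := abs_sub _ _
        _ ≤ C + C := add_le_add h1 h2)
  set x := ∫ s in τ..0, A (V s) with hxdef
  set x' := ∫ s in τ..0, A (V' s) with hx'def
  have hconst : (∫ _ in τ..0, (-ν : ℝ)) = ν * τ := by
    rw [intervalIntegral.integral_const]; ring_nf
  have hxle : x ≤ ν * τ := by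
    rw [← hconst]
    exact intervalIntegral.integral_mono_on hτ hIV intervalIntegrable_const
      (fun s hs => hAν _ (hV s hs.2))
  have hx'le : x' ≤ ν * τ := by
    rw [← hconst]
    exact intervalIntegral.integral_mono_on hτ hIV' intervalIntegrable_const
      (fun s hs => hAν _ (hV' s hs.2))
  have h1 : |x - x'| ≤ ∫ s in τ..0, |A (V s) - A (V' s)| := by
    rw [hxdef, hx'def, ← intervalIntegral.integral_sub hIV hIV']
    exact intervalIntegral.abs_integral_le_integral_abs hτ
  have h2 : (∫ s in τ..0, |A (V s) - A (V' s)|) ≤ g₂ * ∫ s in τ..0, |V s - V' s| := by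
    rw [← intervalIntegral.integral_const_mul]
    exact intervalIntegral.integral_mono_on hτ hIAd (hIabs.const_mul g₂)
      (fun s hs => hLip _ (hV s hs.2) _ (hV' s hs.2))
  calc |Real.exp x - Real.exp x'| ≤ Real.exp (ν * τ) * |x - x'| :=
        dms_aux_exp_sub x x' (ν * τ) hxle hx'le
    _ ≤ Real.exp (ν * τ) * (g₂ * ∫ s in τ..0, |V s - V' s|) :=
        mul_le_mul_of_nonneg_left (h1.trans h2) (Real.exp_pos _).le
    _ = Real.exp (ν * τ) * g₂ * ∫ s in τ..0, |V s - V' s| := by ring
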